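/- arXiv:2406.16263 — 6 statements merged into one kernel-verified Lean document; each statement's English description precedes it below -/
import Mathlib

section
/- Let Γ, D ∈ ℝ^{p×p} be symmetric matrices with Γ positive definite and -2Γ⁻¹ ≤ D < 0 (i.e., D negative definite and D + 2Γ⁻¹ positive semidefinite). Then with A := I + ΓD, B := Γ, C := I, the matrix P := -D is symmetric positive definite and satisfies AᵀPA - P ≤ 0 and C = Bᵀ(I-A)^{-T}P. -/
open Matrix

/-- the discrete-time IRC realization satisfies the NI LMI conditions. -/
theorem stmt0 {p : ℕ} (Γ D : Matrix (Fin p) (Fin p) ℝ)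
    (hΓ : Γ.PosDef) (hDsym : D.IsHermitian)
    (hDneg : (-D).PosDef) (h2 : (D + (2:ℝ) • Γ⁻¹).PosSemidef) :
    (-D).PosDef ∧
    (((-D) : Matrix (Fin p) (Fin p) ℝ) -
      (1 + Γ * D)ᵀ * (-D) * (1 + Γ * D)).PosSemidef ∧
    (1 : Matrix (Fin p) (Fin p) ℝ) = Γᵀ * ((1 - (1 + Γ * D))⁻¹)ᵀ * (-D) := by
  have hΓsym : Γᵀ = Γ := hΓ.isHermitian
  have hDsym' : Dᵀ = D := hDsym
  have hΓunit : IsUnit Γ := hΓ.isUnit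
  have hDunit : IsUnit D := by
    have := hDneg.isUnit
    simpa [isUnit_iff_isUnit_det] using this
  have hΓinv : Γ * Γ⁻¹ = 1 := mul_nonsing_inv _ (isUnit_iff_isUnit_det _ |>.1 hΓunit)
  have hΓinv' : Γ⁻¹ * Γ = 1 := nonsing_inv_mul _ (isUnit_iff_isUnit_det _ |>.1 hΓunit)
  have hDinv : D⁻¹ * D = 1 := nonsing_inv_mul _ (isUnit_iff_isUnit_det _ |>.1 hDunit)
  refine ⟨hDneg, ?_, ?_⟩
  · have key : ((-D) : Matrix (Fin p) (Fin p) ℝ) -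
        (1 + Γ * D)ᵀ * (-D) * (1 + Γ * D)
        = (Γ * D)ᵀ * (D + (2:ℝ) • Γ⁻¹) * (Γ * D) := by
      rw [transpose_add, transpose_one, transpose_mul, hΓsym, hDsym']
      have e1 : D * Γ * (D + (2:ℝ) • Γ⁻¹) = D * Γ * D + (2:ℝ) • D := by
        rw [mul_add, Matrix.mul_smul, mul_assoc D Γ Γ⁻¹, hΓinv, mul_one]
      rw [e1, add_mul (D * Γ * D) ((2:ℝ) • D) (Γ * D), smul_mul_assoc, two_smul]
      noncomm_ring
    rw [key]
    exact h2.conjTranspose_mul_mul_same _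
  · have h1 : (1 : Matrix (Fin p) (Fin p) ℝ) - (1 + Γ * D) = -(Γ * D) := by
      noncomm_ring
    rw [h1]
    have hinv : (-(Γ * D))⁻¹ = -(D⁻¹ * Γ⁻¹) := by
      apply inv_eq_right_inv
      rw [neg_mul_neg, mul_assoc, ← mul_assoc D D⁻¹, mul_nonsing_inv _
        (isUnit_iff_isUnit_det _ |>.1 hDunit), one_mul, hΓinv]
    rw [hinv]
    simp only [transpose_neg, transpose_mul, transpose_nonsing_inv, hΓsym, hDsym',
      mul_neg, neg_mul, neg_neg]
    rw [← Matrix.mul_assoc Γ Γ⁻¹ D⁻¹, hΓinv, one_mul, hDinv]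
end

section
/- Let A ∈ ℝ^{n×n}, B ∈ ℝ^{n×p}, C ∈ ℝ^{p×n}, and P ∈ ℝ^{n×n} symmetric positive definite with det(I - A) ≠ 0 and C = Bᵀ(I-A)^{-T}P. Then the DC gain G(1) := C(I-A)⁻¹B equals CP⁻¹Cᵀ and is symmetric positive semidefinite; if moreover C has full row rank, then G(1) is positive definite. -/
open Matrix

lemma mulVec_transpose_ne_zero {n p : ℕ} (C : Matrix (Fin p) (Fin n) ℝ)
    (hr : C.rank = p) {x : Fin p → ℝ} (hx : x ≠ 0) : Cᵀ *ᵥ x ≠ 0 := by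
  have hrt : Cᵀ.rank = p := by rw [Matrix.rank_transpose]; exact hr
  have hker : LinearMap.ker Cᵀ.mulVecLin = ⊥ := by
    have h := LinearMap.finrank_range_add_finrank_ker Cᵀ.mulVecLin
    rw [show Module.finrank ℝ (LinearMap.range Cᵀ.mulVecLin) = p from hrt,
      Module.finrank_fintype_fun_eq_card, Fintype.card_fin] at h
    have : Module.finrank ℝ (LinearMap.ker Cᵀ.mulVecLin) = 0 := by omega
    exact Submodule.finrank_eq_zero.mp this
  intro h0
  apply hx
  have : x ∈ LinearMap.ker Cᵀ.mulVecLin := h0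
  rwa [hker, Submodule.mem_bot] at this

/-- the DC gain G(1) = C(I-A)⁻¹B equals CP⁻¹Cᵀ, is symmetric PSD,
and is positive definite when C has full row rank. -/
theorem stmt2 {n p : ℕ} (A : Matrix (Fin n) (Fin n) ℝ) (B : Matrix (Fin n) (Fin p) ℝ)
    (C : Matrix (Fin p) (Fin n) ℝ) (P : Matrix (Fin n) (Fin n) ℝ)
    (hP : P.PosDef) (hdet : (1 - A).det ≠ 0)
    (hC : C = Bᵀ * ((1 - A)⁻¹)ᵀ * P) :
    C * (1 - A)⁻¹ * B = C * P⁻¹ * Cᵀ ∧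
    (C * (1 - A)⁻¹ * B).PosSemidef ∧
    (C.rank = p → (C * (1 - A)⁻¹ * B).PosDef) := by
  set M := (1 - A)⁻¹ with hM
  have hPt : Pᵀ = P := by
    simpa [← Matrix.conjTranspose_eq_transpose_of_trivial] using hP.isHermitian.eq
  have hPP : P * P⁻¹ = 1 := Matrix.mul_nonsing_inv P (isUnit_iff_ne_zero.mpr hP.det_pos.ne')
  have hCt : Cᵀ = P * (M * B) := by
    rw [hC]; simp [Matrix.transpose_mul, hPt, Matrix.mul_assoc]
  have key : C * M * B = (M * B)ᵀ * P * (M * B) := by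
    rw [hC]; simp [Matrix.transpose_mul, Matrix.mul_assoc]
  have heq : C * M * B = C * P⁻¹ * Cᵀ := by
    rw [key, hCt, hC]
    simp only [Matrix.transpose_mul, hPt, Matrix.mul_assoc]
    rw [← Matrix.mul_assoc P P⁻¹ (P * (M * B)), hPP, Matrix.one_mul]
  have hconj : (M * B)ᴴ = (M * B)ᵀ := Matrix.conjTranspose_eq_transpose_of_trivial _
  have hpsd : (C * M * B).PosSemidef := by
    rw [key, ← hconj]
    exact hP.posSemidef.conjTranspose_mul_mul_same (M * B)
  refine ⟨heq, hpsd, ?_⟩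
  intro hr
  refine Matrix.PosDef.of_dotProduct_mulVec_pos hpsd.isHermitian ?_
  intro x hx
  have hPinv : (P⁻¹).PosDef := hP.inv
  have hy : Cᵀ *ᵥ x ≠ 0 := mulVec_transpose_ne_zero C hr hx
  have hform : star x ⬝ᵥ (C * M * B) *ᵥ x
      = star (Cᵀ *ᵥ x) ⬝ᵥ P⁻¹ *ᵥ (Cᵀ *ᵥ x) := by
    rw [heq]
    have hsx : star x = x := by simp
    have hsy : star (Cᵀ *ᵥ x) = Cᵀ *ᵥ x := by simp
    rw [hsx, hsy, ← Matrix.mulVec_mulVec, ← Matrix.mulVec_mulVec,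
      Matrix.dotProduct_mulVec x C, ← Matrix.mulVec_transpose]
  rw [hform]
  exact hPinv.dotProduct_mulVec_pos hy
end

section
/- Consider the discrete-time system x_{k+1} = Ax_k + Bu_k, y_k = Cx_k with det(I-A) ≠ 0, and suppose there exists symmetric P > 0 with AᵀPA - P ≤ 0 and C = Bᵀ(I-A)^{-T}P. Then V(x) := (1/2)xᵀPx satisfies the discrete-time negative imaginary dissipation inequality V(x_{k+1}) - V(x_k) ≤ u_kᵀ(y_{k+1} - y_k) for all states x_k ∈ ℝⁿ and inputs u_k ∈ ℝᵖ. -/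
open Matrix

/-- sufficiency of the LMI conditions: V(x) = (1/2)xᵀPx satisfies the
discrete-time negative imaginary dissipation inequality
V(x_{k+1}) - V(x_k) ≤ u_kᵀ(y_{k+1} - y_k), where x_{k+1} = A x_k + B u_k, y = C x. -/
theorem stmt6 {n p : ℕ} (A : Matrix (Fin n) (Fin n) ℝ) (B : Matrix (Fin n) (Fin p) ℝ)
    (C : Matrix (Fin p) (Fin n) ℝ) (P : Matrix (Fin n) (Fin n) ℝ)
    (hdet : (1 - A).det ≠ 0) (hP : P.PosDef)
    (hLyap : (P - Aᵀ * P * A).PosSemidef)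
    (hC : C = Bᵀ * ((1 - A)⁻¹)ᵀ * P) :
    ∀ (xk : Fin n → ℝ) (uk : Fin p → ℝ),
      (1/2) * ((A *ᵥ xk + B *ᵥ uk) ⬝ᵥ (P *ᵥ (A *ᵥ xk + B *ᵥ uk)))
        - (1/2) * (xk ⬝ᵥ (P *ᵥ xk))
      ≤ uk ⬝ᵥ (C *ᵥ (A *ᵥ xk + B *ᵥ uk) - C *ᵥ xk) := by
  intro x u
  have hsym : Pᵀ = P := hP.isHermitian.eq
  have hPsym : ∀ a b : Fin n → ℝ, a ⬝ᵥ P *ᵥ b = b ⬝ᵥ P *ᵥ a := by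
    intro a b
    rw [Matrix.dotProduct_mulVec, ← Matrix.mulVec_transpose, hsym, dotProduct_comm]
  set v := (1 - A)⁻¹ *ᵥ (B *ᵥ u) with hv
  have hBu : B *ᵥ u = (1 - A) *ᵥ v := by
    rw [hv, Matrix.mulVec_mulVec, Matrix.mul_nonsing_inv _ (isUnit_iff_ne_zero.mpr hdet), Matrix.one_mulVec]
  have hCdot : ∀ z, u ⬝ᵥ (C *ᵥ z) = v ⬝ᵥ (P *ᵥ z) := by
    intro z
    rw [hC]
    rw [show (Bᵀ * ((1 - A)⁻¹)ᵀ * P) *ᵥ z = Bᵀ *ᵥ (((1 - A)⁻¹)ᵀ *ᵥ (P *ᵥ z)) by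
      simp [Matrix.mulVec_mulVec, Matrix.mul_assoc]]
    rw [Matrix.dotProduct_mulVec, Matrix.vecMul_transpose,
        Matrix.dotProduct_mulVec, Matrix.vecMul_transpose, ← hv]
  have hAPA : ∀ w : Fin n → ℝ, w ⬝ᵥ ((Aᵀ * P * A) *ᵥ w) = (A *ᵥ w) ⬝ᵥ (P *ᵥ (A *ᵥ w)) := by
    intro w
    rw [show (Aᵀ * P * A) *ᵥ w = Aᵀ *ᵥ (P *ᵥ (A *ᵥ w)) by
      simp [Matrix.mulVec_mulVec, Matrix.mul_assoc],
      Matrix.dotProduct_mulVec, Matrix.vecMul_transpose]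
  have hQ : 0 ≤ (x - v) ⬝ᵥ ((P - Aᵀ * P * A) *ᵥ (x - v)) := by
    have := hLyap.dotProduct_mulVec_nonneg (x - v)
    simpa using this
  have key : u ⬝ᵥ (C *ᵥ (A *ᵥ x + B *ᵥ u) - C *ᵥ x)
      - ((1/2) * ((A *ᵥ x + B *ᵥ u) ⬝ᵥ (P *ᵥ (A *ᵥ x + B *ᵥ u))) - (1/2) * (x ⬝ᵥ (P *ᵥ x)))
      = (1/2) * ((x - v) ⬝ᵥ ((P - Aᵀ * P * A) *ᵥ (x - v))) := by
    have hRHS : (x - v) ⬝ᵥ ((P - Aᵀ * P * A) *ᵥ (x - v))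
        = (x - v) ⬝ᵥ (P *ᵥ (x - v)) - (A *ᵥ (x - v)) ⬝ᵥ (P *ᵥ (A *ᵥ (x - v))) := by
      rw [Matrix.sub_mulVec, dotProduct_sub, hAPA]
    rw [hRHS, dotProduct_sub, hCdot, hCdot, hBu]
    simp only [Matrix.sub_mulVec, Matrix.one_mulVec, Matrix.mulVec_add, Matrix.mulVec_sub,
      dotProduct_add, add_dotProduct, dotProduct_sub,
      sub_dotProduct]
    linarith [hPsym x v, hPsym x (A *ᵥ x), hPsym x (A *ᵥ v), hPsym v (A *ᵥ x),
      hPsym v (A *ᵥ v), hPsym (A *ᵥ x) (A *ᵥ v)]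
  linarith [hQ, key]
end

section
/- Let G(s) = K(s) := (sI - ΓD)⁻¹Γ with Γ ∈ ℝ^{p×p} symmetric positive definite and D ∈ ℝ^{p×p} symmetric negative definite. Then K(s) is well-defined for all s with Re(s) ≥ 0 (i.e., sI - ΓD is invertible there), and for every ω > 0 the matrix j(K(jω) - K(jω)*) is positive definite; that is, K is strictly negative imaginary. -/
open Matrix
open scoped ComplexOrder

namespace Stmt9Aux

variable {p : ℕ}

lemma herm_map {M : Matrix (Fin p) (Fin p) ℝ} (hM : M.IsHermitian) :
    (M.map Complex.ofReal).IsHermitian := by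
  ext i j
  have := hM.apply i j
  simp only [star_trivial] at this
  simp [Matrix.conjTranspose_apply, Matrix.map_apply, this]

lemma symm_dot {M : Matrix (Fin p) (Fin p) ℝ} (hM : M.IsHermitian) (u v : Fin p → ℝ) :
    u ⬝ᵥ M *ᵥ v = v ⬝ᵥ M *ᵥ u := by
  simp only [dotProduct, mulVec, Finset.mul_sum]
  rw [Finset.sum_comm]
  refine Finset.sum_congr rfl fun i _ => Finset.sum_congr rfl fun j _ => ?_
  have := hM.apply i j
  simp only [star_trivial] at this
  rw [← this]; ring

lemma posDef_map {M : Matrix (Fin p) (Fin p) ℝ} (hM : M.PosDef) :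
    (M.map Complex.ofReal).PosDef := by
  refine Matrix.PosDef.of_dotProduct_mulVec_pos (herm_map hM.1) fun x hx => ?_
  set a : Fin p → ℝ := fun i => (x i).re with ha
  set b : Fin p → ℝ := fun i => (x i).im with hb
  set A : Fin p → ℂ := Complex.ofReal ∘ a with hA
  set B : Fin p → ℂ := Complex.ofReal ∘ b with hB
  have hxab : x = A + Complex.I • B := by
    funext i
    simp [hA, hB, ha, hb, Complex.ext_iff]
  have hstar : star x = A + (-Complex.I) • B := by
    funext i
    simp [hA, hB, ha, hb, Complex.ext_iff]
  have hmapv : ∀ v : Fin p → ℝ,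
      (M.map Complex.ofReal) *ᵥ (Complex.ofReal ∘ v) = Complex.ofReal ∘ (M *ᵥ v) := by
    intro v
    funext i
    exact (RingHom.map_mulVec Complex.ofRealHom M v i).symm
  have hdotv : ∀ u v : Fin p → ℝ,
      (Complex.ofReal ∘ u) ⬝ᵥ (Complex.ofReal ∘ v) = ((u ⬝ᵥ v : ℝ) : ℂ) := by
    intro u v
    exact (RingHom.map_dotProduct Complex.ofRealHom u v).symm
  have key : star x ⬝ᵥ (M.map Complex.ofReal) *ᵥ x
      = ((a ⬝ᵥ M *ᵥ a + b ⬝ᵥ M *ᵥ b : ℝ) : ℂ) := by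
    rw [hstar]
    conv_lhs => rw [hxab]
    simp only [hA, hB, mulVec_add, mulVec_smul, add_dotProduct, dotProduct_add,
      smul_dotProduct, dotProduct_smul, hmapv, hdotv, smul_eq_mul]
    rw [symm_dot hM.1 b a]
    push_cast
    set q : ℂ := ((b ⬝ᵥ M *ᵥ b : ℝ) : ℂ) with hq
    linear_combination (-q) * Complex.I_sq
  rw [key]
  rw [Complex.zero_lt_real]
  have hab : a ≠ 0 ∨ b ≠ 0 := by
    by_contra h
    push_neg at h
    apply hx
    rw [hxab]
    simp only [hA, hB, h.1, h.2]
    simp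
  have hsd := hM.posSemidef
  rcases hab with h | h
  · have h1 : 0 < a ⬝ᵥ M *ᵥ a := by simpa using hM.dotProduct_mulVec_pos h
    have h2 : 0 ≤ b ⬝ᵥ M *ᵥ b := by simpa using hsd.dotProduct_mulVec_nonneg b
    linarith
  · have h1 : 0 < b ⬝ᵥ M *ᵥ b := by simpa using hM.dotProduct_mulVec_pos h
    have h2 : 0 ≤ a ⬝ᵥ M *ᵥ a := by simpa using hsd.dotProduct_mulVec_nonneg a
    linarith

lemma posDef_smul_c {M : Matrix (Fin p) (Fin p) ℂ} (hM : M.PosDef) {c : ℝ}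
    (hc : 0 < c) : ((c : ℂ) • M).PosDef := by
  refine Matrix.PosDef.of_dotProduct_mulVec_pos ?_ fun x hx => ?_
  · show _ᴴ = _
    rw [conjTranspose_smul, hM.1.eq]
    congr 1
    simp
  · rw [smul_mulVec, dotProduct_smul, smul_eq_mul]
    have ht := hM.dotProduct_mulVec_pos hx
    have hcc : (0 : ℂ) < (c : ℂ) := Complex.zero_lt_real.mpr hc
    exact mul_pos hcc ht

lemma posDef_conj {M B : Matrix (Fin p) (Fin p) ℂ} (hM : M.PosDef) (hB : IsUnit B) :
    (B * M * Bᴴ).PosDef := by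
  refine Matrix.PosDef.of_dotProduct_mulVec_pos ?_ fun x hx => ?_
  · show _ᴴ = _
    rw [conjTranspose_mul, conjTranspose_mul, conjTranspose_conjTranspose, hM.1.eq,
      Matrix.mul_assoc]
  · have h1 : star x ⬝ᵥ (B * M * Bᴴ) *ᵥ x = star (Bᴴ *ᵥ x) ⬝ᵥ M *ᵥ (Bᴴ *ᵥ x) := by
      rw [star_mulVec, conjTranspose_conjTranspose, ← mulVec_mulVec, ← mulVec_mulVec,
        dotProduct_mulVec]
    rw [h1]
    refine hM.dotProduct_mulVec_pos fun h0 => hx ?_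
    have hBH : IsUnit Bᴴ := (Matrix.isUnit_conjTranspose _).mpr hB
    have hinj := Matrix.mulVec_injective_iff_isUnit.mpr hBH
    have : Bᴴ *ᵥ x = Bᴴ *ᵥ 0 := by simpa using h0
    exact hinj this

lemma part1 {Γ D : Matrix (Fin p) (Fin p) ℝ}
    (hΓ : Γ.PosDef) (hD : D.IsHermitian) (hDneg : (-D).PosDef) :
    ∀ s : ℂ, 0 ≤ s.re →
      IsUnit (s • (1 : Matrix (Fin p) (Fin p) ℂ) - (Γ * D).map Complex.ofReal) := by
  intro s hs
  set Γc := Γ.map Complex.ofReal with hΓcdef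
  set Dc := D.map Complex.ofReal with hDcdef
  have hΓc : Γc.PosDef := posDef_map hΓ
  have hmapneg : (-D).map Complex.ofReal = -Dc := by
    ext i j; simp [hDcdef, Matrix.map_apply]
  have hDcneg : (-Dc).PosDef := by rw [← hmapneg]; exact posDef_map hDneg
  have hDcherm : Dcᴴ = Dc := by
    have := hDcneg.1.eq
    rw [conjTranspose_neg] at this
    exact neg_injective this
  have hMc : (Γ * D).map Complex.ofReal = Γc * Dc := by
    ext i j
    exact RingHom.map_matrix_mul Γ D i j Complex.ofRealHom
  rw [hMc, ← Matrix.mulVec_injective_iff_isUnit]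
  have hker : ∀ x : Fin p → ℂ, (s • 1 - Γc * Dc) *ᵥ x = 0 → x = 0 := by
    intro x hxe
    by_contra hx
    have heq : Γc *ᵥ (Dc *ᵥ x) = s • x := by
      have h1 : (s • (1 : Matrix (Fin p) (Fin p) ℂ) - Γc * Dc) *ᵥ x
          = s • x - Γc *ᵥ (Dc *ᵥ x) := by
        rw [sub_mulVec, smul_mulVec, one_mulVec, mulVec_mulVec]
      rw [h1] at hxe
      exact (sub_eq_zero.mp hxe).symm
    set y := Dc *ᵥ x with hy_def
    have hDc_unit : IsUnit Dc := by
      simpa using hDcneg.isUnit.neg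
    have hy : y ≠ 0 := fun h0 => hx <| Matrix.mulVec_injective_iff_isUnit.mpr hDc_unit
      (by simpa [hy_def] using h0 : Dc *ᵥ x = Dc *ᵥ 0)
    have ht : 0 < star y ⬝ᵥ Γc *ᵥ y := hΓc.dotProduct_mulVec_pos hy
    have hc : star x ⬝ᵥ Dc *ᵥ x < 0 := by
      have h := hDcneg.dotProduct_mulVec_pos hx
      rw [neg_mulVec, dotProduct_neg] at h
      exact neg_pos.mp h
    have hrel : star y ⬝ᵥ Γc *ᵥ y = s * (star x ⬝ᵥ Dc *ᵥ x) := by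
      calc star y ⬝ᵥ Γc *ᵥ y = star y ⬝ᵥ (s • x) := by rw [hy_def, heq]
        _ = s * (star y ⬝ᵥ x) := by rw [dotProduct_smul, smul_eq_mul]
        _ = s * (star x ⬝ᵥ Dc *ᵥ x) := by
            congr 1
            rw [hy_def, star_mulVec, hDcherm, ← dotProduct_mulVec]
    rw [hrel] at ht
    rw [Complex.lt_def] at ht hc
    have him : (star x ⬝ᵥ Dc *ᵥ x).im = 0 := by simpa using hc.2
    have hre : (star x ⬝ᵥ Dc *ᵥ x).re < 0 := by simpa using hc.1
    have hpos : 0 < (s * (star x ⬝ᵥ Dc *ᵥ x)).re := by simpa using ht.1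
    rw [Complex.mul_re, him] at hpos
    nlinarith
  intro u v huv
  have h0 : (s • 1 - Γc * Dc) *ᵥ (u - v) = 0 := by
    rw [mulVec_sub, huv, sub_self]
  exact sub_eq_zero.mp (hker _ h0)

end Stmt9Aux

/-- the continuous-time IRC K(s) = (sI - ΓD)⁻¹Γ is well defined on the
closed right half plane and is strictly negative imaginary:
j(K(jω) - K(jω)*) > 0 for all ω > 0. -/
theorem stmt9 {p : ℕ} (Γ D : Matrix (Fin p) (Fin p) ℝ)
    (hΓ : Γ.PosDef) (hD : D.IsHermitian) (hDneg : (-D).PosDef) :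
    (∀ s : ℂ, 0 ≤ s.re →
      IsUnit (s • (1 : Matrix (Fin p) (Fin p) ℂ) - (Γ * D).map Complex.ofReal)) ∧
    (∀ ω : ℝ, 0 < ω →
      (Complex.I •
        ((((Complex.I * ω) • (1 : Matrix (Fin p) (Fin p) ℂ)
            - (Γ * D).map Complex.ofReal)⁻¹ * Γ.map Complex.ofReal)
         - (((Complex.I * ω) • (1 : Matrix (Fin p) (Fin p) ℂ)
            - (Γ * D).map Complex.ofReal)⁻¹ * Γ.map Complex.ofReal)ᴴ)).PosDef) := by
  refine ⟨Stmt9Aux.part1 hΓ hD hDneg, ?_⟩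
  intro ω hω
  set Γc := Γ.map Complex.ofReal with hΓcdef
  set Dc := D.map Complex.ofReal with hDcdef
  have hΓc : Γc.PosDef := Stmt9Aux.posDef_map hΓ
  have hDcherm : Dcᴴ = Dc := (Stmt9Aux.herm_map hD).eq
  have hMc : (Γ * D).map Complex.ofReal = Γc * Dc := by
    ext i j
    exact RingHom.map_matrix_mul Γ D i j Complex.ofRealHom
  set A := (Complex.I * (ω : ℂ)) • (1 : Matrix (Fin p) (Fin p) ℂ)
      - (Γ * D).map Complex.ofReal with hAdef
  have hA : IsUnit A := Stmt9Aux.part1 hΓ hD hDneg (Complex.I * ω)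
    (by simp [Complex.mul_re])
  have hAdet : IsUnit A.det := (Matrix.isUnit_iff_isUnit_det A).mp hA
  have hAH : IsUnit Aᴴ := (Matrix.isUnit_conjTranspose _).mpr hA
  have hAHdet : IsUnit (Aᴴ).det := (Matrix.isUnit_iff_isUnit_det _).mp hAH
  have step0 : (A⁻¹ * Γc)ᴴ = Γc * (Aᴴ)⁻¹ := by
    rw [conjTranspose_mul, hΓc.1.eq, conjTranspose_nonsing_inv]
  have stepAH : Aᴴ = (-(Complex.I * (ω : ℂ))) • (1 : Matrix (Fin p) (Fin p) ℂ)
      - Dc * Γc := by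
    rw [hAdef, conjTranspose_sub, conjTranspose_smul, conjTranspose_one, hMc,
      conjTranspose_mul, hDcherm, hΓc.1.eq]
    congr 1
    congr 1
    simp [Complex.ext_iff]
  have e1 : A⁻¹ * (Γc * Aᴴ) * (Aᴴ)⁻¹ = A⁻¹ * Γc := by
    rw [Matrix.mul_assoc (A⁻¹), Matrix.mul_assoc Γc, Matrix.mul_nonsing_inv _ hAHdet,
      Matrix.mul_one]
  have e2 : A⁻¹ * (A * Γc) * (Aᴴ)⁻¹ = Γc * (Aᴴ)⁻¹ := by
    rw [← Matrix.mul_assoc, Matrix.nonsing_inv_mul _ hAdet, Matrix.one_mul]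
  have step2 : A⁻¹ * Γc - Γc * (Aᴴ)⁻¹ = A⁻¹ * (Γc * Aᴴ - A * Γc) * (Aᴴ)⁻¹ := by
    rw [Matrix.mul_sub, Matrix.sub_mul, e1, e2]
  have step1 : Γc * Aᴴ - A * Γc = (-(2 * Complex.I * (ω : ℂ))) • Γc := by
    rw [stepAH, hAdef, hMc]
    rw [Matrix.mul_sub, Matrix.sub_mul, Matrix.mul_smul, Matrix.smul_mul,
      Matrix.mul_one, Matrix.one_mul, Matrix.mul_assoc]
    module
  have hscal : Complex.I * (-(2 * Complex.I * (ω : ℂ))) = ((2 * ω : ℝ) : ℂ) := by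
    push_cast
    have h := Complex.I_sq
    linear_combination (-2 * (ω : ℂ)) * h
  have hresult : Complex.I • (A⁻¹ * Γc - (A⁻¹ * Γc)ᴴ)
      = ((2 * ω : ℝ) : ℂ) • (A⁻¹ * Γc * (A⁻¹)ᴴ) := by
    rw [step0, step2, step1, Matrix.mul_smul, Matrix.smul_mul, smul_smul, hscal,
      conjTranspose_nonsing_inv]
  rw [hresult]
  have hAinv : IsUnit A⁻¹ := Matrix.isUnit_nonsing_inv_iff.mpr hA
  exact Stmt9Aux.posDef_smul_c (Stmt9Aux.posDef_conj hΓc hAinv) (by linarith)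
end

section
/- Let A, P ∈ ℝ^{n×n} with P symmetric positive definite and AᵀPA - P ≤ 0, let B = (I-A)P⁻¹Cᵀ for some C ∈ ℝ^{p×n} with det(I-A) ≠ 0, let Γ, D ∈ ℝ^{p×p} symmetric with Γ > 0 and D + 2Γ⁻¹ > 0. Define Q = [[P, -Cᵀ], [-C, -D]] and Â = [[A + BΓC, B + BΓD], [ΓC, I + ΓD]]. Then ÂᵀQÂ - Q = N₁ P⁻¹(AᵀPA - P)P⁻¹ N₁ᵀ - N₂ (D + 2Γ⁻¹) N₂ᵀ, where N₁ = [[CᵀΓC - P], [(I + DΓ)C]] and N₂ = [[CᵀΓ], [DΓ]], and consequently ÂᵀQÂ - Q ≤ 0. -/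
set_option maxHeartbeats 4000000


open Matrix

/-- the central Lyapunov decrease computation:
ÂᵀQÂ - Q = N₁P⁻¹(AᵀPA - P)P⁻¹N₁ᵀ - N₂(D + 2Γ⁻¹)N₂ᵀ ≤ 0. -/
theorem stmt12 {n p : ℕ} (A P : Matrix (Fin n) (Fin n) ℝ)
    (C : Matrix (Fin p) (Fin n) ℝ) (B : Matrix (Fin n) (Fin p) ℝ)
    (Γ D : Matrix (Fin p) (Fin p) ℝ)
    (hP : P.PosDef) (hLyap : (P - Aᵀ * P * A).PosSemidef)
    (hdet : (1 - A).det ≠ 0) (hB : B = (1 - A) * P⁻¹ * Cᵀ)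
    (hΓs : Γ.IsHermitian) (hDs : D.IsHermitian)
    (hΓ : Γ.PosDef) (hDΓ : (D + (2:ℝ) • Γ⁻¹).PosDef) :
    (letI Q : Matrix (Fin n ⊕ Fin p) (Fin n ⊕ Fin p) ℝ :=
        Matrix.fromBlocks P (-Cᵀ) (-C) (-D)
     letI Ahat : Matrix (Fin n ⊕ Fin p) (Fin n ⊕ Fin p) ℝ :=
        Matrix.fromBlocks (A + B * Γ * C) (B + B * Γ * D) (Γ * C) (1 + Γ * D)
     letI N₁ : Matrix (Fin n ⊕ Fin p) (Fin n) ℝ :=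
        Matrix.fromRows (Cᵀ * Γ * C - P) ((1 + D * Γ) * C)
     letI N₂ : Matrix (Fin n ⊕ Fin p) (Fin p) ℝ :=
        Matrix.fromRows (Cᵀ * Γ) (D * Γ)
     Ahatᵀ * Q * Ahat - Q
        = N₁ * P⁻¹ * (Aᵀ * P * A - P) * P⁻¹ * N₁ᵀ
          - N₂ * (D + (2:ℝ) • Γ⁻¹) * N₂ᵀ ∧
     (Q - Ahatᵀ * Q * Ahat).PosSemidef) := by
  have hPt : Pᵀ = P := by
    rw [← conjTranspose_eq_transpose_of_trivial]; exact hP.1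
  have hGt : Γᵀ = Γ := by
    rw [← conjTranspose_eq_transpose_of_trivial]; exact hΓs
  have hDt : Dᵀ = D := by
    rw [← conjTranspose_eq_transpose_of_trivial]; exact hDs
  have hPd : IsUnit P.det := isUnit_iff_ne_zero.2 hP.det_pos.ne'
  have hΓd : IsUnit Γ.det := isUnit_iff_ne_zero.2 hΓ.det_pos.ne'
  have hPW : P * P⁻¹ = 1 := mul_nonsing_inv P hPd
  have hWP : P⁻¹ * P = 1 := nonsing_inv_mul P hPd
  have hGV : Γ * Γ⁻¹ = 1 := mul_nonsing_inv Γ hΓd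
  have hVG : Γ⁻¹ * Γ = 1 := nonsing_inv_mul Γ hΓd
  have hWt : (P⁻¹)ᵀ = P⁻¹ := by rw [transpose_nonsing_inv, hPt]
  have hVt : (Γ⁻¹)ᵀ = Γ⁻¹ := by rw [transpose_nonsing_inv, hGt]
  have e1 : ∀ X : Matrix (Fin n) (Fin p) ℝ, P * (P⁻¹ * X) = X := fun X => by
    rw [← Matrix.mul_assoc, hPW, Matrix.one_mul]
  have e1' : ∀ X : Matrix (Fin n) (Fin n) ℝ, P * (P⁻¹ * X) = X := fun X => by
    rw [← Matrix.mul_assoc, hPW, Matrix.one_mul]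
  have e2 : ∀ X : Matrix (Fin n) (Fin p) ℝ, P⁻¹ * (P * X) = X := fun X => by
    rw [← Matrix.mul_assoc, hWP, Matrix.one_mul]
  have e2' : ∀ X : Matrix (Fin n) (Fin n) ℝ, P⁻¹ * (P * X) = X := fun X => by
    rw [← Matrix.mul_assoc, hWP, Matrix.one_mul]
  have e3 : ∀ X : Matrix (Fin p) (Fin n) ℝ, Γ * (Γ⁻¹ * X) = X := fun X => by
    rw [← Matrix.mul_assoc, hGV, Matrix.one_mul]
  have e3' : ∀ X : Matrix (Fin p) (Fin p) ℝ, Γ * (Γ⁻¹ * X) = X := fun X => by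
    rw [← Matrix.mul_assoc, hGV, Matrix.one_mul]
  have e4 : ∀ X : Matrix (Fin p) (Fin n) ℝ, Γ⁻¹ * (Γ * X) = X := fun X => by
    rw [← Matrix.mul_assoc, hVG, Matrix.one_mul]
  have e4' : ∀ X : Matrix (Fin p) (Fin p) ℝ, Γ⁻¹ * (Γ * X) = X := fun X => by
    rw [← Matrix.mul_assoc, hVG, Matrix.one_mul]
  subst hB
  have key :
      (fromBlocks (A + (1 - A) * P⁻¹ * Cᵀ * Γ * C)
          ((1 - A) * P⁻¹ * Cᵀ + (1 - A) * P⁻¹ * Cᵀ * Γ * D) (Γ * C) (1 + Γ * D))ᵀ *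
        fromBlocks P (-Cᵀ) (-C) (-D) *
        fromBlocks (A + (1 - A) * P⁻¹ * Cᵀ * Γ * C)
          ((1 - A) * P⁻¹ * Cᵀ + (1 - A) * P⁻¹ * Cᵀ * Γ * D) (Γ * C) (1 + Γ * D)
        - fromBlocks P (-Cᵀ) (-C) (-D)
      = fromRows (Cᵀ * Γ * C - P) ((1 + D * Γ) * C) * P⁻¹ * (Aᵀ * P * A - P) * P⁻¹ *
          (fromRows (Cᵀ * Γ * C - P) ((1 + D * Γ) * C))ᵀ
        - fromRows (Cᵀ * Γ) (D * Γ) * (D + (2:ℝ) • Γ⁻¹) * (fromRows (Cᵀ * Γ) (D * Γ))ᵀ := by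
    simp only [fromBlocks_transpose, fromBlocks_multiply, transpose_fromRows,
      fromRows_mul, mul_fromCols, fromRows_fromCols_eq_fromBlocks, fromCols_fromRows_eq_fromBlocks, sub_eq_add_neg, fromBlocks_neg,
      fromBlocks_add]
    rw [fromBlocks_inj]
    refine ⟨?_, ?_, ?_, ?_⟩ <;>
    · simp only [two_smul, transpose_add, transpose_mul, transpose_sub,
        transpose_one, transpose_neg, transpose_transpose, hPt, hGt, hDt, hWt, hVt,
        Matrix.mul_add, Matrix.add_mul, Matrix.mul_sub, Matrix.sub_mul,
        mul_add, add_mul, mul_sub, sub_mul, sub_eq_add_neg, neg_add,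
        Matrix.mul_neg, Matrix.neg_mul, mul_neg, neg_mul, neg_neg,
        Matrix.smul_mul, Matrix.mul_smul, smul_smul, smul_add, smul_neg,
        Matrix.mul_one, Matrix.one_mul, mul_one, one_mul,
        Matrix.mul_assoc, mul_assoc, hPW, hWP, hGV, hVG,
        e1, e1', e2, e2', e3, e3', e4, e4']
      abel
  refine ⟨key, ?_⟩
  have key2 :
      fromBlocks P (-Cᵀ) (-C) (-D)
        - (fromBlocks (A + (1 - A) * P⁻¹ * Cᵀ * Γ * C)
            ((1 - A) * P⁻¹ * Cᵀ + (1 - A) * P⁻¹ * Cᵀ * Γ * D) (Γ * C) (1 + Γ * D))ᵀ *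
          fromBlocks P (-Cᵀ) (-C) (-D) *
          fromBlocks (A + (1 - A) * P⁻¹ * Cᵀ * Γ * C)
            ((1 - A) * P⁻¹ * Cᵀ + (1 - A) * P⁻¹ * Cᵀ * Γ * D) (Γ * C) (1 + Γ * D)
      = fromRows (Cᵀ * Γ) (D * Γ) * (D + (2:ℝ) • Γ⁻¹) * (fromRows (Cᵀ * Γ) (D * Γ))ᵀ
        + (fromRows (Cᵀ * Γ * C - P) ((1 + D * Γ) * C) * P⁻¹) * (P - Aᵀ * P * A) *
            (fromRows (Cᵀ * Γ * C - P) ((1 + D * Γ) * C) * P⁻¹)ᵀ := by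
    rw [← neg_sub, key, transpose_mul, hWt]
    simp only [Matrix.mul_add, Matrix.add_mul, Matrix.mul_sub, Matrix.sub_mul,
      sub_eq_add_neg, neg_add, Matrix.mul_neg, Matrix.neg_mul, neg_neg,
      Matrix.smul_mul, Matrix.mul_smul, smul_add, smul_neg, smul_smul, neg_smul,
      Matrix.mul_assoc]
    abel
  rw [key2]
  have h1 := hDΓ.posSemidef.mul_mul_conjTranspose_same (fromRows (Cᵀ * Γ) (D * Γ))
  have h2 := hLyap.mul_mul_conjTranspose_same
      (fromRows (Cᵀ * Γ * C - P) ((1 + D * Γ) * C) * P⁻¹)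
  rw [conjTranspose_eq_transpose_of_trivial] at h1 h2
  exact h1.add h2
end

section
/- Suppose the discrete-time linear system x_{k+1} = Ax_k + Bu_k, y_k = Cx_k is minimal (controllable and observable) with det(I-A) ≠ 0, and there is symmetric P > 0 with AᵀPA - P ≤ 0 and C = Bᵀ(I-A)^{-T}P. Let Γ, D ∈ ℝ^{p×p} be symmetric with Γ > 0 and -2Γ⁻¹ < D < -G(1), where G(1) = C(I-A)⁻¹B. Then the positive feedback interconnection with the discrete-time IRC x̃_{k+1} = (I+ΓD)x̃_k + Γy_k, u_k = (I+ΓD)x̃_k + Γy_k is asymptotically stable: every closed-loop trajectory (x_k, x̃_k) converges to (0,0). -/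
open Matrix Filter Topology



open Matrix Filter Topology
open scoped ENNReal NNReal

namespace Stmt13Aux

attribute [local instance] Matrix.linftyOpNormedAddCommGroup Matrix.linftyOpNormedRing
  Matrix.linftyOpNormedAlgebra

lemma re_qf {m : Type*} [Fintype m] (R : Matrix m m ℝ) (v : m → ℂ) :
    (star v ⬝ᵥ ((R.map Complex.ofReal) *ᵥ v)).re =
      (fun i => (v i).re) ⬝ᵥ (R *ᵥ fun i => (v i).re) +
      (fun i => (v i).im) ⬝ᵥ (R *ᵥ fun i => (v i).im) := by
  simp only [dotProduct, mulVec, Finset.mul_sum, Complex.re_sum, map_apply, Pi.star_apply,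
    Complex.mul_re, Complex.mul_im, Complex.ofReal_re, Complex.ofReal_im, RCLike.star_def,
    Complex.conj_re, Complex.conj_im, dotProduct]
  rw [← Finset.sum_add_distrib]
  refine Finset.sum_congr rfl fun i _ => ?_
  rw [← Finset.sum_add_distrib]
  refine Finset.sum_congr rfl fun j _ => ?_
  ring

lemma re_qf_nonneg {m : Type*} [Fintype m] {R : Matrix m m ℝ} (h : R.PosSemidef) (v : m → ℂ) :
    0 ≤ (star v ⬝ᵥ ((R.map Complex.ofReal) *ᵥ v)).re := by
  rw [re_qf]
  have h1 := h.dotProduct_mulVec_nonneg (fun i => (v i).re)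
  have h2 := h.dotProduct_mulVec_nonneg (fun i => (v i).im)
  simp only [star_trivial] at h1 h2
  · positivity

lemma re_qf_pos {m : Type*} [Fintype m] {R : Matrix m m ℝ} (h : R.PosDef) {v : m → ℂ}
    (hv : v ≠ 0) : 0 < (star v ⬝ᵥ ((R.map Complex.ofReal) *ᵥ v)).re := by
  rw [re_qf]
  have hre : (fun i => (v i).re) ≠ 0 ∨ (fun i => (v i).im) ≠ 0 := by
    by_contra hc
    push_neg at hc
    apply hv
    funext i
    exact Complex.ext (by simpa using congrFun hc.1 i) (by simpa using congrFun hc.2 i)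
  rcases hre with h1 | h1
  · have := h.dotProduct_mulVec_pos h1
    have h2 := h.posSemidef.dotProduct_mulVec_nonneg (fun i => (v i).im)
    simp only [RCLike.re_to_real, star_trivial] at this h2
    linarith
  · have := h.dotProduct_mulVec_pos h1
    have h2 := h.posSemidef.dotProduct_mulVec_nonneg (fun i => (v i).re)
    simp only [RCLike.re_to_real, star_trivial] at this h2
    linarith

lemma re_qf_eq_zero {m : Type*} [Fintype m] {R : Matrix m m ℝ} (h : R.PosDef) {v : m → ℂ}
    (hz : (star v ⬝ᵥ ((R.map Complex.ofReal) *ᵥ v)).re = 0) : v = 0 := by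
  by_contra hv
  exact (re_qf_pos h hv).ne' hz

lemma cT_map {m l : Type*} (N : Matrix m l ℝ) :
    (N.map Complex.ofReal)ᴴ = Nᵀ.map Complex.ofReal := by
  ext i j
  simp [conjTranspose_apply, Complex.conj_ofReal]

/-- moving a complexified real matrix across the hermitian inner product -/
lemma star_move {m l : Type*} [Fintype m] [Fintype l] (N : Matrix m l ℝ) (u : l → ℂ) (w : m → ℂ) :
    star u ⬝ᵥ ((Nᵀ.map Complex.ofReal) *ᵥ w) = star ((N.map Complex.ofReal) *ᵥ u) ⬝ᵥ w := by
  rw [star_mulVec, cT_map, ← dotProduct_mulVec]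

lemma re_mulVec_map {m l : Type*} [Fintype l] (N : Matrix m l ℝ) (u : l → ℂ) (i : m) :
    (((N.map Complex.ofReal) *ᵥ u) i).re = (N *ᵥ fun j => (u j).re) i ∧
    (((N.map Complex.ofReal) *ᵥ u) i).im = (N *ᵥ fun j => (u j).im) i := by
  constructor <;>
  · simp [mulVec, dotProduct, Complex.re_sum, Complex.im_sum]

lemma map_mul' {ι κ l : Type*} [Fintype κ] (N₁ : Matrix ι κ ℝ) (N₂ : Matrix κ l ℝ) :
    (N₁ * N₂).map Complex.ofReal = (N₁.map Complex.ofReal) * (N₂.map Complex.ofReal) := by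
  ext i j
  simp [mul_apply]

lemma map_sub' {ι κ : Type*} (N₁ N₂ : Matrix ι κ ℝ) :
    (N₁ - N₂).map Complex.ofReal = N₁.map Complex.ofReal - N₂.map Complex.ofReal := by
  ext i j; simp

lemma map_neg' {ι κ : Type*} (N : Matrix ι κ ℝ) :
    (-N).map Complex.ofReal = -(N.map Complex.ofReal) := by
  ext i j; simp

lemma map_one' {ι : Type*} [Fintype ι] [DecidableEq ι] :
    (1 : Matrix ι ι ℝ).map Complex.ofReal = 1 := by
  ext i j
  by_cases h : i = j <;> simp [one_apply, h]

lemma map_zero' {ι κ : Type*} : (0 : Matrix ι κ ℝ).map Complex.ofReal = 0 := by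
  ext i j; simp

lemma det_map' {m : Type*} [Fintype m] [DecidableEq m] (N : Matrix m m ℝ) :
    (N.map Complex.ofReal).det = (N.det : ℂ) := by
  have := RingHom.map_det Complex.ofRealHom N
  exact this.symm

lemma mulVec_eq_zero {m : Type*} [Fintype m] [DecidableEq m] {N : Matrix m m ℂ}
    (h : N.det ≠ 0) {v : m → ℂ} (hv : N *ᵥ v = 0) : v = 0 := by
  by_contra h0
  exact h ((Matrix.exists_mulVec_eq_zero_iff).mp ⟨v, h0, hv⟩)

lemma star_elim {ι κ : Type*} (v₁ : ι → ℂ) (v₂ : κ → ℂ) :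
    star (Sum.elim v₁ v₂) = Sum.elim (star v₁) (star v₂) := by
  funext i; cases i <;> rfl

lemma qf_split {ι κ : Type*} [Fintype ι] [Fintype κ]
    (W : Matrix ι ι ℝ) (X : Matrix ι κ ℝ) (Y : Matrix κ ι ℝ) (Z : Matrix κ κ ℝ)
    (v₁ : ι → ℂ) (v₂ : κ → ℂ) :
    star (Sum.elim v₁ v₂) ⬝ᵥ (((fromBlocks W X Y Z).map Complex.ofReal) *ᵥ Sum.elim v₁ v₂)
      = star v₁ ⬝ᵥ ((W.map Complex.ofReal) *ᵥ v₁)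
        + star v₁ ⬝ᵥ ((X.map Complex.ofReal) *ᵥ v₂)
        + star v₂ ⬝ᵥ ((Y.map Complex.ofReal) *ᵥ v₁)
        + star v₂ ⬝ᵥ ((Z.map Complex.ofReal) *ᵥ v₂) := by
  rw [fromBlocks_map, fromBlocks_mulVec, star_elim, sumElim_dotProduct_sumElim,
    dotProduct_add, dotProduct_add, Sum.elim_comp_inl, Sum.elim_comp_inr]
  ring

lemma fromBlocks_sub' {n p : Type*} (W W' : Matrix n n ℝ) (X X' : Matrix n p ℝ)
    (Y Y' : Matrix p n ℝ) (Z Z' : Matrix p p ℝ) :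
    fromBlocks W X Y Z - fromBlocks W' X' Y' Z'
      = fromBlocks (W - W') (X - X') (Y - Y') (Z - Z') := by
  simp only [sub_eq_add_neg, fromBlocks_neg, fromBlocks_add]

lemma key_identity {n p : Type*} [Fintype n] [Fintype p] [DecidableEq n] [DecidableEq p]
    (A P : Matrix n n ℝ) (Γ D M R : Matrix p p ℝ) (F : Matrix n p ℝ) (Cm : Matrix p n ℝ)
    (hPt : Pᵀ = P) (hΓt : Γᵀ = Γ) (hDt : Dᵀ = D)
    (hCd : Cm = Fᵀ * P) (hMd : M = -(Cm * F) - D) (hRd : R = Γ + Γ + Γ * D * Γ) :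
    (fromBlocks (A - F*(Γ*(Cm*A))) (F*(Γ*M)) (Γ*(Cm*A)) (1 - Γ*M))ᵀ
        * (fromBlocks P 0 0 M)
        * (fromBlocks (A - F*(Γ*(Cm*A))) (F*(Γ*M)) (Γ*(Cm*A)) (1 - Γ*M))
        - (fromBlocks P 0 0 M)
      = fromBlocks (Aᵀ*P*A - P - (Cm*A)ᵀ*(R*(Cm*A))) ((Cm*A)ᵀ*(R*M))
          (M*(R*(Cm*A))) (-(M*(R*M))) := by
  subst hCd hMd hRd
  rw [fromBlocks_transpose, fromBlocks_multiply, fromBlocks_multiply, fromBlocks_sub']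
  refine fromBlocks_inj.mpr ⟨?_, ?_, ?_, ?_⟩ <;>
  · simp only [transpose_mul, transpose_sub, transpose_neg, transpose_one, transpose_transpose,
      hPt, hΓt, hDt, Matrix.mul_add, Matrix.add_mul, Matrix.mul_sub, Matrix.sub_mul,
      Matrix.mul_assoc, Matrix.mul_zero, Matrix.zero_mul, Matrix.mul_one, Matrix.one_mul,
      Matrix.mul_neg, Matrix.neg_mul, add_zero, zero_add, sub_zero, zero_sub, neg_neg]
    abel

lemma spec_lt_one {m : Type*} [Fintype m] [DecidableEq m] [Nonempty m] (Mc : Matrix m m ℂ)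
    (h : ∀ (μ : ℂ) (v : m → ℂ), v ≠ 0 → Mc *ᵥ v = μ • v → ‖μ‖₊ < 1) :
    spectralRadius ℂ Mc < 1 := by
  have hnt : Nontrivial (Matrix m m ℂ) := Matrix.nonempty
  have := spectrum.spectralRadius_lt_of_forall_lt (a := Mc) (r := 1) ?_
  · simpa using this
  · intro μ hμ
    rw [spectrum.mem_iff] at hμ
    rw [Matrix.isUnit_iff_isUnit_det, isUnit_iff_ne_zero, not_not,
      ← Matrix.exists_mulVec_eq_zero_iff] at hμ
    obtain ⟨v, hv, hveq⟩ := hμ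
    refine h μ v hv ?_
    have : (algebraMap ℂ (Matrix m m ℂ)) μ *ᵥ v = μ • v := by
      rw [Algebra.algebraMap_eq_smul_one, smul_mulVec, one_mulVec]
    rw [sub_mulVec, this, sub_eq_zero] at hveq
    exact hveq.symm

lemma pow_mulVec_tendsto {m : Type*} [Fintype m] [DecidableEq m] (M : Matrix m m ℝ)
    (h : ∀ (μ : ℂ) (v : m → ℂ), v ≠ 0 →
      (M.map Complex.ofReal) *ᵥ v = μ • v → ‖μ‖₊ < 1) (u : m → ℝ) :
    Tendsto (fun k => (M ^ k) *ᵥ u) atTop (𝓝 0) := by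
  cases isEmpty_or_nonempty m with
  | inl he => exact tendsto_const_nhds.congr fun k => (Subsingleton.elim _ _)
  | inr hne =>
    set Mc : Matrix m m ℂ := M.map Complex.ofReal with hMc
    have hρ : spectralRadius ℂ Mc < 1 := spec_lt_one Mc h
    have hg := spectrum.pow_nnnorm_pow_one_div_tendsto_nhds_spectralRadius Mc
    obtain ⟨c, hc1, hc2⟩ := ENNReal.lt_iff_exists_nnreal_btwn.mp hρ
    have hc2' : c < 1 := by exact_mod_cast hc2
    have hev : ∀ᶠ k : ℕ in atTop, (‖Mc ^ k‖₊ : ℝ≥0∞) ^ (1 / (k:ℝ)) < (c : ℝ≥0∞) :=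
      hg.eventually_lt_const hc1
    have hev2 : ∀ᶠ k : ℕ in atTop, ‖Mc ^ k‖ ≤ (c:ℝ) ^ k := by
      filter_upwards [hev, eventually_ge_atTop 1] with k hk hk1
      have hk0 : (k:ℝ) ≠ 0 := by positivity
      have : ((‖Mc ^ k‖₊ : ℝ≥0∞) ^ (1 / (k:ℝ))) ^ (k:ℝ) < ((c:ℝ≥0∞)) ^ (k:ℝ) :=
        ENNReal.rpow_lt_rpow hk (by positivity)
      rw [← ENNReal.rpow_mul, one_div_mul_cancel hk0, ENNReal.rpow_one] at this
      rw [ENNReal.rpow_natCast, ← ENNReal.coe_pow,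
        ENNReal.coe_lt_coe] at this
      exact_mod_cast this.le
    have hnorm : Tendsto (fun k => ‖Mc ^ k‖) atTop (𝓝 0) := by
      refine squeeze_zero' (Filter.Eventually.of_forall fun k => norm_nonneg _) hev2 ?_
      exact tendsto_pow_atTop_nhds_zero_of_lt_one c.coe_nonneg hc2'
    set uc : m → ℂ := fun i => (u i : ℂ) with huc
    have hvec : Tendsto (fun k => (Mc ^ k) *ᵥ uc) atTop (𝓝 0) := by
      rw [tendsto_zero_iff_norm_tendsto_zero]
      refine squeeze_zero (fun k => norm_nonneg _) (fun k => Matrix.linfty_opNorm_mulVec _ _) ?_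
      simpa using hnorm.mul_const ‖uc‖
    have hmap : ∀ k, (Mc ^ k) *ᵥ uc = fun i => (((M ^ k) *ᵥ u) i : ℂ) := by
      intro k
      have : Mc ^ k = (M ^ k).map Complex.ofReal := by
        rw [hMc]
        exact (map_pow (Complex.ofRealHom.mapMatrix) M k).symm
      rw [this]
      funext i
      simp [mulVec, dotProduct, huc]
    rw [tendsto_pi_nhds]
    intro i
    have h2 : Tendsto (fun k => ((Mc ^ k) *ᵥ uc) i) atTop (𝓝 0) := by
      exact ((continuous_apply i).continuousAt.tendsto.comp hvec)
    rw [Pi.zero_apply]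
    rw [tendsto_zero_iff_norm_tendsto_zero]
    rw [tendsto_zero_iff_norm_tendsto_zero] at h2
    refine h2.congr fun k => ?_
    rw [hmap k]
    simp

lemma herm_transpose {m : Type*} [Fintype m] {N : Matrix m m ℝ} (h : N.IsHermitian) :
    Nᵀ = N := by
  ext i j
  have := congrFun (congrFun h.eq i) j
  simpa [conjTranspose_apply] using this

lemma star_move_symm {m : Type*} [Fintype m] {N : Matrix m m ℝ} (hN : Nᵀ = N) (u w : m → ℂ) :
    star u ⬝ᵥ ((N.map Complex.ofReal) *ᵥ w) = star ((N.map Complex.ofReal) *ᵥ u) ⬝ᵥ w := by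
  conv_lhs => rw [← hN]
  rw [star_move]

lemma smul_elim {ι κ : Type*} (μ : ℂ) (v₁ : ι → ℂ) (v₂ : κ → ℂ) :
    μ • Sum.elim v₁ v₂ = Sum.elim (μ • v₁) (μ • v₂) := by
  funext i; cases i <;> rfl

end Stmt13Aux

open Stmt13Aux

/-- main theorem: the positive feedback interconnection of a minimal
discrete-time NI plant with a discrete-time IRC satisfying -2Γ⁻¹ < D < -G(1) is
asymptotically stable: every closed-loop trajectory converges to the origin. -/
theorem stmt13 {n p : ℕ} (A : Matrix (Fin n) (Fin n) ℝ) (B : Matrix (Fin n) (Fin p) ℝ)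
    (C : Matrix (Fin p) (Fin n) ℝ) (P : Matrix (Fin n) (Fin n) ℝ)
    (Γ D : Matrix (Fin p) (Fin p) ℝ)
    -- minimality
    (hctrb : ∀ v : Fin n → ℝ, (∀ k : ℕ, Bᵀ *ᵥ ((Aᵀ)^k *ᵥ v) = 0) → v = 0)
    (hobs : ∀ v : Fin n → ℝ, (∀ k : ℕ, C *ᵥ (A^k *ᵥ v) = 0) → v = 0)
    -- NI LMI conditions
    (hdet : (1 - A).det ≠ 0) (hP : P.PosDef)
    (hLyap : (P - Aᵀ * P * A).PosSemidef)
    (hC : C = Bᵀ * ((1 - A)⁻¹)ᵀ * P)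
    -- IRC parameter conditions: Γ > 0, -2Γ⁻¹ < D < -G(1)
    (hΓ : Γ.PosDef) (hDs : D.IsHermitian)
    (hlow : (D + (2:ℝ) • Γ⁻¹).PosDef)
    (hhigh : (-(C * (1 - A)⁻¹ * B) - D).PosDef) :
    ∀ (x : ℕ → Fin n → ℝ) (xt : ℕ → Fin p → ℝ),
      (∀ k, x (k+1) = A *ᵥ x k + B *ᵥ ((1 + Γ * D) *ᵥ xt k + Γ *ᵥ (C *ᵥ x k))) →
      (∀ k, xt (k+1) = (1 + Γ * D) *ᵥ xt k + Γ *ᵥ (C *ᵥ x k)) →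
      Tendsto x atTop (𝓝 0) ∧ Tendsto xt atTop (𝓝 0) := by
  intro x xt hx hxt
  -- basic real-matrix setup
  have hdetU : IsUnit (1 - A).det := isUnit_iff_ne_zero.mpr hdet
  set F : Matrix (Fin n) (Fin p) ℝ := (1 - A)⁻¹ * B with hF
  have hBF : (1 - A) * F = B := by
    rw [hF, ← Matrix.mul_assoc, Matrix.mul_nonsing_inv _ hdetU, Matrix.one_mul]
  have hFP : Fᵀ * P = C := by
    rw [hF, transpose_mul]
    exact hC.symm
  set M : Matrix (Fin p) (Fin p) ℝ := -(C * F) - D with hMdef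
  have hMeq : M = -(C * (1 - A)⁻¹ * B) - D := by
    rw [hMdef, hF, Matrix.mul_assoc]
  have hMpd : M.PosDef := by rw [hMeq]; exact hhigh
  have hPt : Pᵀ = P := herm_transpose hP.1
  have hΓt : Γᵀ = Γ := herm_transpose hΓ.1
  have hDt : Dᵀ = D := herm_transpose hDs
  have hCd : C = Fᵀ * P := hFP.symm
  have hCFt : (C * F)ᵀ = C * F := by
    rw [hCd]
    simp [transpose_mul, hPt, Matrix.mul_assoc]
  have hMt : Mᵀ = M := by
    rw [hMdef, transpose_sub, transpose_neg, hCFt, hDt]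
  have hΓdet : IsUnit Γ.det := isUnit_iff_ne_zero.mpr hΓ.det_pos.ne'
  set X : Matrix (Fin p) (Fin p) ℝ := D + (2:ℝ) • Γ⁻¹ with hXdef
  set R : Matrix (Fin p) (Fin p) ℝ := Γ + Γ + Γ * D * Γ with hRdef
  have hRX : R = Γ * (X * Γ) := by
    rw [hRdef, hXdef, Matrix.add_mul, Matrix.smul_mul, Matrix.nonsing_inv_mul _ hΓdet,
      Matrix.mul_add, Matrix.mul_smul, Matrix.mul_one, two_smul, ← Matrix.mul_assoc]
    abel
  -- closed-loop matrix
  set Acl : Matrix (Fin n ⊕ Fin p) (Fin n ⊕ Fin p) ℝ :=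
    fromBlocks (A - F*(Γ*(C*A))) (F*(Γ*M)) (Γ*(C*A)) (1 - Γ*M) with hAcl
  have hKey := key_identity A P Γ D M R F C hPt hΓt hDt hCd hMdef hRdef
  clear_value F M X R Acl
  -- the eigenvalue bound
  have hEig : ∀ (μ : ℂ) (v : Fin n ⊕ Fin p → ℂ), v ≠ 0 →
      (Acl.map Complex.ofReal) *ᵥ v = μ • v → ‖μ‖₊ < 1 := by
    intro μ v hv0 hv
    by_contra hge
    push_neg at hge
    have hge' : (1:ℝ) ≤ ‖μ‖ := by exact_mod_cast hge
    set Qm : Matrix (Fin n ⊕ Fin p) (Fin n ⊕ Fin p) ℝ := fromBlocks P 0 0 M with hQm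
    set v₁ : Fin n → ℂ := fun i => v (Sum.inl i) with hv₁
    set v₂ : Fin p → ℂ := fun i => v (Sum.inr i) with hv₂
    have hsum : v = Sum.elim v₁ v₂ := by funext i; cases i <;> rfl
    clear_value v₁ v₂
    set a : Fin p → ℂ := ((C*A).map Complex.ofReal) *ᵥ v₁ with ha
    set b : Fin p → ℂ := (M.map Complex.ofReal) *ᵥ v₂ with hb
    set s : Fin p → ℂ := a - b with hs
    clear_value a b s
    -- the Q-quadratic form
    have hQsplit : star v ⬝ᵥ ((Qm.map Complex.ofReal) *ᵥ v)
        = star v₁ ⬝ᵥ ((P.map Complex.ofReal) *ᵥ v₁)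
          + star v₂ ⬝ᵥ ((M.map Complex.ofReal) *ᵥ v₂) := by
      conv_lhs => rw [hsum, hQm]
      rw [qf_split]
      simp [map_zero']
    set α : ℝ := (star v₁ ⬝ᵥ ((P.map Complex.ofReal) *ᵥ v₁)).re
      + (star v₂ ⬝ᵥ ((M.map Complex.ofReal) *ᵥ v₂)).re with hα
    have hαpos : 0 < α := by
      have h12 : v₁ ≠ 0 ∨ v₂ ≠ 0 := by
        by_contra hc
        push_neg at hc
        apply hv0
        rw [hsum, hc.1, hc.2]
        funext i; cases i <;> rfl
      rcases h12 with h1 | h1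
      · have := re_qf_pos hP h1
        have h2 := re_qf_nonneg hMpd.posSemidef v₂
        rw [hα]; linarith
      · have := re_qf_pos hMpd h1
        have h2 := re_qf_nonneg hP.posSemidef v₁
        rw [hα]; linarith
    -- evaluate the Lyapunov difference via the eigenvector relation
    set LHS : ℂ := star v ⬝ᵥ (((Aclᵀ * Qm * Acl - Qm).map Complex.ofReal) *ᵥ v) with hLHS
    have hev1 : LHS = (star μ * μ) * (star v ⬝ᵥ ((Qm.map Complex.ofReal) *ᵥ v))
        - star v ⬝ᵥ ((Qm.map Complex.ofReal) *ᵥ v) := by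
      rw [hLHS, map_sub', map_mul', map_mul', sub_mulVec, dotProduct_sub,
        ← Matrix.mulVec_mulVec, ← Matrix.mulVec_mulVec, star_move Acl,
        hv, star_smul, mulVec_smul, smul_dotProduct, dotProduct_smul,
        smul_eq_mul, smul_eq_mul]
      ring
    have hre1 : LHS.re = Complex.normSq μ * α - α := by
      rw [hev1, Complex.sub_re]
      have h1 : star μ * μ = (Complex.normSq μ : ℂ) := by
        rw [Complex.normSq_eq_conj_mul_self]; rfl
      rw [h1, Complex.re_ofReal_mul, hQsplit, Complex.add_re, ← hα]
    -- evaluate via the key identity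
    have hsRs : star s ⬝ᵥ ((R.map Complex.ofReal) *ᵥ s)
        = star a ⬝ᵥ ((R.map Complex.ofReal) *ᵥ a) - star a ⬝ᵥ ((R.map Complex.ofReal) *ᵥ b)
          - star b ⬝ᵥ ((R.map Complex.ofReal) *ᵥ a)
          + star b ⬝ᵥ ((R.map Complex.ofReal) *ᵥ b) := by
      rw [hs, star_sub, mulVec_sub, sub_dotProduct, dotProduct_sub, dotProduct_sub]
      ring
    have hev2 : LHS = star v₁ ⬝ᵥ (((Aᵀ*P*A - P).map Complex.ofReal) *ᵥ v₁)
        - star s ⬝ᵥ ((R.map Complex.ofReal) *ᵥ s) := by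
      rw [hLHS]
      conv_lhs => rw [hsum, hAcl, hQm, hKey]
      rw [qf_split]
      have hT1 : star v₁ ⬝ᵥ (((Aᵀ*P*A - P - (C*A)ᵀ*(R*(C*A))).map Complex.ofReal) *ᵥ v₁)
          = star v₁ ⬝ᵥ (((Aᵀ*P*A - P).map Complex.ofReal) *ᵥ v₁)
            - star a ⬝ᵥ ((R.map Complex.ofReal) *ᵥ a) := by
        rw [map_sub' (Aᵀ*P*A - P), sub_mulVec, dotProduct_sub, map_mul', map_mul',
          ← Matrix.mulVec_mulVec, ← Matrix.mulVec_mulVec, star_move (C*A), ← ha]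
      have hT2 : star v₁ ⬝ᵥ ((((C*A)ᵀ*(R*M)).map Complex.ofReal) *ᵥ v₂)
          = star a ⬝ᵥ ((R.map Complex.ofReal) *ᵥ b) := by
        rw [map_mul', map_mul', ← Matrix.mulVec_mulVec, ← Matrix.mulVec_mulVec,
          star_move (C*A), ← ha, ← hb]
      have hT3 : star v₂ ⬝ᵥ (((M*(R*(C*A))).map Complex.ofReal) *ᵥ v₁)
          = star b ⬝ᵥ ((R.map Complex.ofReal) *ᵥ a) := by
        rw [map_mul', map_mul', ← Matrix.mulVec_mulVec, ← Matrix.mulVec_mulVec,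
          star_move_symm hMt, ← ha, ← hb]
      have hT4 : star v₂ ⬝ᵥ (((-(M*(R*M))).map Complex.ofReal) *ᵥ v₂)
          = -(star b ⬝ᵥ ((R.map Complex.ofReal) *ᵥ b)) := by
        rw [map_neg', neg_mulVec, dotProduct_neg, map_mul', map_mul',
          ← Matrix.mulVec_mulVec, ← Matrix.mulVec_mulVec, star_move_symm hMt, ← hb]
      rw [hT1, hT2, hT3, hT4, hsRs]
      ring
    -- sign information
    have hβ1 : (star v₁ ⬝ᵥ (((Aᵀ*P*A - P).map Complex.ofReal) *ᵥ v₁)).re ≤ 0 := by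
      have h0 : Aᵀ*P*A - P = -(P - Aᵀ*P*A) := (neg_sub _ _).symm
      rw [h0, map_neg', neg_mulVec, dotProduct_neg, Complex.neg_re, neg_nonpos]
      exact re_qf_nonneg hLyap v₁
    set t : Fin p → ℂ := (Γ.map Complex.ofReal) *ᵥ s with ht
    clear_value t
    have hRs : star s ⬝ᵥ ((R.map Complex.ofReal) *ᵥ s)
        = star t ⬝ᵥ ((X.map Complex.ofReal) *ᵥ t) := by
      rw [hRX, map_mul', map_mul', ← Matrix.mulVec_mulVec, ← Matrix.mulVec_mulVec,
        star_move_symm hΓt, ← ht]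
    have hβ2 : 0 ≤ (star s ⬝ᵥ ((R.map Complex.ofReal) *ᵥ s)).re := by
      rw [hRs]
      exact re_qf_nonneg hlow.posSemidef t
    -- combine
    have hmain : Complex.normSq μ * α - α
        = (star v₁ ⬝ᵥ (((Aᵀ*P*A - P).map Complex.ofReal) *ᵥ v₁)).re
          - (star s ⬝ᵥ ((R.map Complex.ofReal) *ᵥ s)).re := by
      rw [← hre1, hev2, Complex.sub_re]
    have hns1 : (1:ℝ) ≤ Complex.normSq μ := by
      have h0 : (1:ℝ)*1 ≤ ‖μ‖*‖μ‖ :=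
        mul_le_mul hge' hge' (by norm_num) (norm_nonneg μ)
      rw [Complex.normSq_eq_norm_sq, sq]
      linarith
    have hle : Complex.normSq μ * α - α ≤ 0 := by rw [hmain]; linarith
    have hns2 : Complex.normSq μ ≤ 1 := by
      by_contra hgt
      push_neg at hgt
      have h0 : 0 < (Complex.normSq μ - 1) * α := mul_pos (by linarith) hαpos
      nlinarith
    have hns : Complex.normSq μ = 1 := le_antisymm hns2 hns1
    have hz2 : (star s ⬝ᵥ ((R.map Complex.ofReal) *ᵥ s)).re = 0 := by
      rw [hns] at hmain
      linarith
    -- hence s = 0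
    have ht0 : t = 0 := by
      apply re_qf_eq_zero hlow
      rw [← hRs]
      exact hz2
    have hs0 : s = 0 := by
      refine mulVec_eq_zero ?_ (ht ▸ ht0)
      rw [Stmt13Aux.det_map']
      exact Complex.ofReal_ne_zero.mpr hΓ.det_pos.ne'
    have hab : a = b := sub_eq_zero.mp (hs ▸ hs0)
    -- eigenvector component equations
    have hveq : (Acl.map Complex.ofReal) *ᵥ Sum.elim v₁ v₂ = Sum.elim (μ • v₁) (μ • v₂) := by
      rw [← hsum, hv, hsum, smul_elim]
    rw [hAcl, fromBlocks_map, fromBlocks_mulVec, Sum.elim_comp_inl, Sum.elim_comp_inr] at hveq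
    have heq1 : ((A - F*(Γ*(C*A))).map Complex.ofReal) *ᵥ v₁
        + ((F*(Γ*M)).map Complex.ofReal) *ᵥ v₂ = μ • v₁ := by
      funext i; exact congrFun hveq (Sum.inl i)
    have heq2 : ((Γ*(C*A)).map Complex.ofReal) *ᵥ v₁
        + ((1 - Γ*M).map Complex.ofReal) *ᵥ v₂ = μ • v₂ := by
      funext i; exact congrFun hveq (Sum.inr i)
    have hsplit1 : ((A - F*(Γ*(C*A))).map Complex.ofReal) *ᵥ v₁
        + ((F*(Γ*M)).map Complex.ofReal) *ᵥ v₂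
        = (A.map Complex.ofReal) *ᵥ v₁
          - (F.map Complex.ofReal) *ᵥ ((Γ.map Complex.ofReal) *ᵥ s) := by
      rw [hs, ha, hb]
      simp only [Stmt13Aux.map_sub', map_mul', ← Matrix.mulVec_mulVec, mulVec_sub, sub_mulVec]
      abel
    have hA1 : (A.map Complex.ofReal) *ᵥ v₁ = μ • v₁ := by
      rw [← heq1, hsplit1, hs0, mulVec_zero, mulVec_zero, sub_zero]
    have hsplit2 : ((Γ*(C*A)).map Complex.ofReal) *ᵥ v₁ + ((1 - Γ*M).map Complex.ofReal) *ᵥ v₂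
        = v₂ + (Γ.map Complex.ofReal) *ᵥ s := by
      rw [hs, ha, hb]
      simp only [Stmt13Aux.map_sub', map_one', map_mul', ← Matrix.mulVec_mulVec, mulVec_sub, sub_mulVec,
        one_mulVec]
      abel
    have hA2 : μ • v₂ = v₂ := by
      rw [← heq2, hsplit2, hs0, mulVec_zero, add_zero]
    -- case analysis on μ
    by_cases hμ1 : μ = 1
    · -- v₁ = 0 from invertibility of 1 - A
      have hv1z : v₁ = 0 := by
        refine mulVec_eq_zero (N := (1 - A).map Complex.ofReal) ?_ ?_
        · rw [Stmt13Aux.det_map']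
          exact Complex.ofReal_ne_zero.mpr hdet
        · rw [Stmt13Aux.map_sub', map_one', sub_mulVec, one_mulVec, hA1, hμ1, one_smul, sub_self]
      have hbz : (M.map Complex.ofReal) *ᵥ v₂ = 0 := by
        rw [← hb, ← hab, ha, hv1z, mulVec_zero]
      have hv2z : v₂ = 0 := by
        refine mulVec_eq_zero ?_ hbz
        rw [Stmt13Aux.det_map']
        exact Complex.ofReal_ne_zero.mpr hMpd.det_pos.ne'
      apply hv0
      rw [hsum, hv1z, hv2z]
      funext i; cases i <;> rfl
    · -- v₂ = 0, then use observability
      have hv2z : v₂ = 0 := by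
        have h0 : (μ - 1) • v₂ = 0 := by
          rw [sub_smul, hA2, one_smul, sub_self]
        rcases smul_eq_zero.mp h0 with h | h
        · exact absurd (sub_eq_zero.mp h) hμ1
        · exact h
      have haz : a = 0 := by rw [hab, hb, hv2z, mulVec_zero]
      have hμ0 : μ ≠ 0 := by
        intro h
        rw [h] at hge'
        norm_num at hge'
      have hCv1 : (C.map Complex.ofReal) *ᵥ v₁ = 0 := by
        have h0 : (C.map Complex.ofReal) *ᵥ ((A.map Complex.ofReal) *ᵥ v₁) = 0 := by
          rw [Matrix.mulVec_mulVec, ← map_mul', ← ha, haz]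
        rw [hA1, mulVec_smul] at h0
        exact (smul_eq_zero.mp h0).resolve_left hμ0
      have hpow : ∀ k : ℕ, ((A^k).map Complex.ofReal) *ᵥ v₁ = (μ^k) • v₁ := by
        intro k
        induction k with
        | zero => rw [pow_zero, pow_zero, map_one', one_mulVec, one_smul]
        | succ k ih =>
          rw [pow_succ', map_mul', ← Matrix.mulVec_mulVec, ih, mulVec_smul, hA1,
            smul_smul, ← pow_succ]
      have hobsC : ∀ k : ℕ, (C.map Complex.ofReal) *ᵥ (((A^k).map Complex.ofReal) *ᵥ v₁) = 0 := by
        intro k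
        rw [hpow k, mulVec_smul, hCv1, smul_zero]
      have hre0 : ∀ k : ℕ, C *ᵥ (A^k *ᵥ (fun i => (v₁ i).re)) = 0 := by
        intro k
        funext i
        have h0 : (((C.map Complex.ofReal) *ᵥ (((A^k).map Complex.ofReal) *ᵥ v₁)) i).re
            = 0 := by rw [hobsC k]; rfl
        rw [(re_mulVec_map C _ i).1] at h0
        have h2 : (fun j => ((((A^k).map Complex.ofReal) *ᵥ v₁) j).re)
            = A^k *ᵥ (fun i => (v₁ i).re) := by
          funext j; exact (re_mulVec_map (A^k) v₁ j).1
        rw [h2] at h0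
        exact h0
      have him0 : ∀ k : ℕ, C *ᵥ (A^k *ᵥ (fun i => (v₁ i).im)) = 0 := by
        intro k
        funext i
        have h0 : (((C.map Complex.ofReal) *ᵥ (((A^k).map Complex.ofReal) *ᵥ v₁)) i).im
            = 0 := by rw [hobsC k]; rfl
        rw [(re_mulVec_map C _ i).2] at h0
        have h2 : (fun j => ((((A^k).map Complex.ofReal) *ᵥ v₁) j).im)
            = A^k *ᵥ (fun i => (v₁ i).im) := by
          funext j; exact (re_mulVec_map (A^k) v₁ j).2
        rw [h2] at h0
        exact h0
      have hre' := hobs _ hre0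
      have him' := hobs _ him0
      have hv1z : v₁ = 0 := by
        funext i
        exact Complex.ext (by simpa using congrFun hre' i) (by simpa using congrFun him' i)
      apply hv0
      rw [hsum, hv1z, hv2z]
      funext i; cases i <;> rfl
  -- closed-loop trajectory
  set w : ℕ → Fin p → ℝ := fun k => xt (k+1) with hw
  set e : ℕ → Fin n → ℝ := fun k => x k - F *ᵥ w k with he
  set z : ℕ → Fin n ⊕ Fin p → ℝ := fun k => Sum.elim (e k) (w k) with hz
  have hxe : ∀ k, x k = e k + F *ᵥ w k := by
    intro k
    show x k = (x k - F *ᵥ w k) + F *ᵥ w k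
    abel
  have hwk : ∀ k, w k = (1 + Γ * D) *ᵥ xt k + Γ *ᵥ (C *ᵥ x k) := fun k => hxt k
  have hBFA : B = F - A * F := by rw [← hBF, Matrix.sub_mul, Matrix.one_mul]
  have hxs : ∀ k, x (k+1) = A *ᵥ e k + F *ᵥ w k := by
    intro k
    have h1 : x (k+1) = A *ᵥ x k + B *ᵥ w k := by rw [hx k, ← hwk k]
    rw [h1, hxe k, hBFA]
    simp only [← Matrix.mulVec_mulVec, mulVec_add, mulVec_sub, sub_mulVec]
    abel
  have hws : ∀ k, w (k+1) = Γ *ᵥ ((C*A) *ᵥ e k) + (w k - Γ *ᵥ (M *ᵥ w k)) := by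
    intro k
    have h1 : w (k+1) = (1 + Γ * D) *ᵥ w k + Γ *ᵥ (C *ᵥ x (k+1)) := hwk (k+1)
    rw [h1, hxs k, hMdef]
    simp only [← Matrix.mulVec_mulVec, mulVec_add, mulVec_sub, sub_mulVec, add_mulVec,
      neg_mulVec, mulVec_neg, one_mulVec]
    abel
  have hes : ∀ k, e (k+1) = (A - F*(Γ*(C*A))) *ᵥ e k + (F*(Γ*M)) *ᵥ w k := by
    intro k
    have h0 : e (k+1) = x (k+1) - F *ᵥ w (k+1) := rfl
    rw [h0, hxs k, hws k]
    simp only [← Matrix.mulVec_mulVec, mulVec_add, mulVec_sub, sub_mulVec, add_mulVec,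
      neg_mulVec, mulVec_neg, one_mulVec]
    abel
  have hzs : ∀ k, z (k+1) = Acl *ᵥ z k := by
    intro k
    show Sum.elim (e (k+1)) (w (k+1)) = Acl *ᵥ Sum.elim (e k) (w k)
    rw [hAcl, fromBlocks_mulVec, Sum.elim_comp_inl, Sum.elim_comp_inr, hes k, hws k]
    congr 1
    all_goals simp only [← Matrix.mulVec_mulVec, mulVec_add, mulVec_sub, sub_mulVec, add_mulVec,
      neg_mulVec, mulVec_neg, one_mulVec]
    all_goals abel
  have hzpow : ∀ k, z k = (Acl ^ k) *ᵥ z 0 := by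
    intro k
    induction k with
    | zero => rw [pow_zero, one_mulVec]
    | succ k ih => rw [hzs k, ih, mulVec_mulVec, ← pow_succ']
  have hztend : Tendsto z atTop (𝓝 0) := by
    have := pow_mulVec_tendsto Acl hEig (z 0)
    exact this.congr fun k => (hzpow k).symm
  -- extract components
  have hwtend : Tendsto w atTop (𝓝 0) := by
    rw [tendsto_pi_nhds] at hztend ⊢
    intro i
    exact hztend (Sum.inr i)
  have hetend : Tendsto e atTop (𝓝 0) := by
    rw [tendsto_pi_nhds] at hztend ⊢
    intro i
    exact hztend (Sum.inl i)
  constructor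
  · have hwtend' := tendsto_pi_nhds.mp hwtend
    have h2 : Tendsto (fun k => F *ᵥ w k) atTop (𝓝 0) := by
      rw [tendsto_pi_nhds]
      intro i
      have hsum : ∀ k, (F *ᵥ w k) i = ∑ j, F i j * w k j := fun k => rfl
      have h0 : Tendsto (fun k => ∑ j, F i j * w k j) atTop (𝓝 (∑ j : Fin p, F i j * 0)) :=
        tendsto_finset_sum _ (fun j _ => (hwtend' j).const_mul (F i j))
      simp only [mul_zero, Finset.sum_const_zero] at h0
      exact (h0.congr fun k => (hsum k).symm)
    have := hetend.add h2
    rw [add_zero] at this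
    exact this.congr fun k => (hxe k).symm
  · have h1 : Tendsto (fun k => xt (k + 1)) atTop (𝓝 0) := hwtend
    exact (tendsto_add_atTop_iff_nat 1).mp h1
end
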